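/- (Theorem 1) Let A be a real m×n matrix, y ∈ ℝ^m, δ > 0, and let W(x) = ‖y − Ax‖₂ + δ‖x‖₂. Suppose x̂ ∈ ℝ^n is a global minimizer of W with x̂ ≠ 0 and Ax̂ ≠ y. Set ρ = δ·‖y − Ax̂‖₂/‖x̂‖₂. Then ρ > 0, the matrix AᵀA + ρIₙ is invertible, and x̂ = (AᵀA + ρIₙ)⁻¹Aᵀy. -/

import Mathlib

open Matrix

lemma norm_sub_smul_hasDerivAt {E : Type*} [NormedAddCommGroup E] [InnerProductSpace ℝ E]
    (c w : E) (hc : c ≠ 0) :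
    HasDerivAt (fun t : ℝ => ‖c - t • w‖) (-(inner ℝ c w / ‖c‖) : ℝ) 0 := by
  have hq : HasDerivAt (fun t : ℝ => ‖c‖ ^ 2 - 2 * inner ℝ c w * t + ‖w‖ ^ 2 * t ^ 2)
      (-(2 * inner ℝ c w) + ‖w‖^2 * (2 * 0)) 0 := by
    have h1 : HasDerivAt (fun t : ℝ => ‖c‖ ^ 2 - 2 * inner ℝ c w * t)
        (-(2 * inner ℝ c w)) 0 := by
      simpa using ((hasDerivAt_id (0:ℝ)).const_mul (2 * (inner ℝ c w : ℝ))).const_sub (‖c‖^2)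
    have h2 : HasDerivAt (fun t : ℝ => ‖w‖ ^ 2 * t ^ 2) (‖w‖^2 * (2 * 0)) 0 := by
      have := (hasDerivAt_pow 2 (0:ℝ)).const_mul (‖w‖^2)
      simpa using this
    exact h1.add h2
  have hq0 : (‖c‖ ^ 2 - 2 * inner ℝ c w * (0:ℝ) + ‖w‖ ^ 2 * (0:ℝ) ^ 2) ≠ 0 := by
    have hcpos : 0 < ‖c‖ := norm_pos_iff.mpr hc
    rw [show ‖c‖ ^ 2 - 2 * inner ℝ c w * (0:ℝ) + ‖w‖ ^ 2 * (0:ℝ) ^ 2 = ‖c‖ ^ 2 by ring]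
    positivity
  have h := (Real.hasDerivAt_sqrt hq0).comp 0 hq
  have heq : (fun t : ℝ => ‖c - t • w‖) =
      fun t : ℝ => Real.sqrt (‖c‖ ^ 2 - 2 * inner ℝ c w * t + ‖w‖ ^ 2 * t ^ 2) := by
    funext t
    rw [show ‖c‖ ^ 2 - 2 * inner ℝ c w * t + ‖w‖ ^ 2 * t ^ 2
        = ‖c - t • w‖ ^ 2 by
      rw [norm_sub_sq_real, real_inner_smul_right, norm_smul]
      simp [mul_pow]; ring]
    rw [Real.sqrt_sq (norm_nonneg _)]
  rw [heq]
  refine h.congr_deriv ?_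
  symm
  have hnc : ‖c‖ ≠ 0 := norm_ne_zero_iff.mpr hc
  rw [show (‖c‖ ^ 2 - 2 * inner ℝ c w * (0:ℝ) + ‖w‖ ^ 2 * (0:ℝ) ^ 2) = ‖c‖^2 by ring,
    Real.sqrt_sq (norm_nonneg _)]
  field_simp
  ring

lemma toEuclideanLin_mul_apply {p q s : ℕ} (M : Matrix (Fin p) (Fin q) ℝ)
    (N : Matrix (Fin q) (Fin s) ℝ) (v : EuclideanSpace ℝ (Fin s)) :
    Matrix.toEuclideanLin (M * N) v = Matrix.toEuclideanLin M (Matrix.toEuclideanLin N v) := by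
  simp [Matrix.toEuclideanLin_apply, Matrix.mulVec_mulVec]

theorem stmt_4 (m n : ℕ) (A : Matrix (Fin m) (Fin n) ℝ)
    (y : EuclideanSpace ℝ (Fin m)) (δ : ℝ) (hδ : 0 < δ)
    (xh : EuclideanSpace ℝ (Fin n)) (hxh : xh ≠ 0)
    (hAxh : Matrix.toEuclideanLin A xh ≠ y)
    (hmin : ∀ x : EuclideanSpace ℝ (Fin n),
      ‖y - Matrix.toEuclideanLin A xh‖ + δ * ‖xh‖ ≤
        ‖y - Matrix.toEuclideanLin A x‖ + δ * ‖x‖) :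
    ∀ ρ : ℝ, ρ = δ * ‖y - Matrix.toEuclideanLin A xh‖ / ‖xh‖ →
      0 < ρ ∧
      IsUnit (Aᵀ * A + ρ • (1 : Matrix (Fin n) (Fin n) ℝ)) ∧
      xh = Matrix.toEuclideanLin
        ((Aᵀ * A + ρ • (1 : Matrix (Fin n) (Fin n) ℝ))⁻¹ * Aᵀ) y := by
  intro ρ hρ
  set L := Matrix.toEuclideanLin A with hL
  set r : EuclideanSpace ℝ (Fin m) := y - L xh with hr
  have hrne : r ≠ 0 := sub_ne_zero.mpr (Ne.symm hAxh)
  have hrn : (0:ℝ) < ‖r‖ := norm_pos_iff.mpr hrne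
  have hxn : (0:ℝ) < ‖xh‖ := norm_pos_iff.mpr hxh
  have hρpos : 0 < ρ := by
    rw [hρ]; exact div_pos (mul_pos hδ hrn) hxn
  have hAT : (Aᵀ : Matrix (Fin n) (Fin m) ℝ) = Aᴴ := by
    ext i j; simp [Matrix.conjTranspose_apply]
  -- first-order condition
  have key : ∀ v : EuclideanSpace ℝ (Fin n),
      (inner ℝ r (L v) : ℝ) = ρ * inner ℝ xh v := by
    intro v
    have hd1 : HasDerivAt (fun t : ℝ => ‖r - t • (L v)‖) (-(inner ℝ r (L v) / ‖r‖) : ℝ) 0 :=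
      norm_sub_smul_hasDerivAt r (L v) hrne
    have hd2 : HasDerivAt (fun t : ℝ => ‖xh - t • (-v)‖) (-(inner ℝ xh (-v) / ‖xh‖) : ℝ) 0 :=
      norm_sub_smul_hasDerivAt xh (-v) hxh
    have hd : HasDerivAt (fun t : ℝ => ‖r - t • (L v)‖ + δ * ‖xh - t • (-v)‖)
        (-(inner ℝ r (L v) / ‖r‖) + δ * -((inner ℝ xh (-v) : ℝ) / ‖xh‖)) 0 :=
      hd1.add (hd2.const_mul δ)
    have hls : IsLocalMin (fun t : ℝ => ‖r - t • (L v)‖ + δ * ‖xh - t • (-v)‖) 0 := by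
      apply Filter.Eventually.of_forall
      intro t
      have h := hmin (xh + t • v)
      simp only [hr, map_add, _root_.map_smul, smul_neg, sub_neg_eq_add, sub_sub] at h ⊢
      simpa [sub_sub] using h
    have h0 := hls.hasDerivAt_eq_zero hd
    rw [inner_neg_right, neg_div, neg_neg] at h0
    have h1 : (inner ℝ r (L v) : ℝ) / ‖r‖ = δ * ((inner ℝ xh v : ℝ) / ‖xh‖) := by linarith
    rw [hρ]
    field_simp at h1 ⊢
    nlinarith [h1]
  -- adjoint identity
  have hadjL : Matrix.toEuclideanLin Aᵀ = LinearMap.adjoint L := by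
    rw [hAT, hL, Matrix.toEuclideanLin_conjTranspose_eq_adjoint]
  have hnormal : Matrix.toEuclideanLin Aᵀ r = ρ • xh := by
    have hz : ∀ v : EuclideanSpace ℝ (Fin n),
        (inner ℝ (Matrix.toEuclideanLin Aᵀ r - ρ • xh) v : ℝ) = 0 := by
      intro v
      rw [inner_sub_left, real_inner_smul_left, hadjL, LinearMap.adjoint_inner_left, key v]
      ring
    have := hz (Matrix.toEuclideanLin Aᵀ r - ρ • xh)
    exact sub_eq_zero.mp (inner_self_eq_zero.mp this)
  set M : Matrix (Fin n) (Fin n) ℝ := Aᵀ * A + ρ • (1 : Matrix (Fin n) (Fin n) ℝ) with hM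
  have hMeq : Matrix.toEuclideanLin M xh = Matrix.toEuclideanLin Aᵀ y := by
    have h2 : Matrix.toEuclideanLin (ρ • (1 : Matrix (Fin n) (Fin n) ℝ)) xh = ρ • xh := by
      rw [_root_.map_smul]
      simp [Matrix.toEuclideanLin_apply, Matrix.one_mulVec]
    have h1 : Matrix.toEuclideanLin M xh
        = Matrix.toEuclideanLin Aᵀ (L xh) + ρ • xh := by
      rw [hM, map_add, LinearMap.add_apply, toEuclideanLin_mul_apply, h2]
    rw [h1, ← hnormal, hr, ← map_add]
    congr 1
    abel
  have hPD : M.PosDef := by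
    have h1 : (Aᵀ * A).PosSemidef := by
      rw [hAT]; exact Matrix.posSemidef_conjTranspose_mul_self A
    have h2 : (ρ • (1 : Matrix (Fin n) (Fin n) ℝ)).PosDef := by
      rw [Matrix.smul_one_eq_diagonal]
      exact Matrix.posDef_diagonal_iff.mpr fun _ => hρpos
    exact Matrix.PosDef.posSemidef_add h1 h2
  have hunit : IsUnit M := hPD.isUnit
  refine ⟨hρpos, hunit, ?_⟩
  rw [toEuclideanLin_mul_apply, ← hMeq, ← toEuclideanLin_mul_apply,
    Matrix.nonsing_inv_mul M (Matrix.isUnit_iff_isUnit_det M |>.mp hunit)]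
  simp [Matrix.toEuclideanLin_apply, Matrix.one_mulVec]
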